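/- arXiv:1112.0216 — 3 statements merged into one kernel-verified Lean document; each statement's English description precedes it below -/
import Mathlib

section
/- With the relativistic Lagrangian L(q,v) = G(q,v)^{1/(2N)} + Σ_μ A_μ(q) v^μ, for every smooth curve c : ℝ → ℝᵐ with nowhere-vanishing derivative, the Euler–Lagrange expressions ℰ_λ(c)(τ) = (∂L/∂q^λ)(c(τ), c'(τ)) − (d/dτ)[(∂L/∂v^λ)(c(τ), c'(τ))] satisfy the Noether identities Σ_λ c'^λ(τ)·ℰ_λ(c)(τ) = 0 for all τ. -/
open ContDiff

open scoped BigOperators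

/-- Partial derivative of a function `f : ℝᵐ → ℝ` in the `lam`-th coordinate direction. -/
noncomputable def partialDeriv {m : ℕ} (f : (Fin m → ℝ) → ℝ) (lam : Fin m)
    (q : Fin m → ℝ) : ℝ :=
  fderiv ℝ f q (Pi.single lam 1)

/-- `G(q,v) = Σ_{α₁,…,α_{2N}} g_{α₁…α_{2N}}(q) v^{α₁}⋯v^{α_{2N}}`. -/
noncomputable def Gfun (m N : ℕ) (g : (Fin (2 * N) → Fin m) → (Fin m → ℝ) → ℝ)
    (q v : Fin m → ℝ) : ℝ :=
  ∑ α : Fin (2 * N) → Fin m, g α q * ∏ k : Fin (2 * N), v (α k)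

/-- The index tuple `(μ, α₂, …, α_{2N})` built from a head index `μ` and a tail `t`. -/
def tupCons1 (m N : ℕ) (μ : Fin m) (t : Fin (2 * N - 1) → Fin m) :
    Fin (2 * N) → Fin m :=
  fun k => if h : (k : ℕ) = 0 then μ else t ⟨(k : ℕ) - 1, by have := k.isLt; omega⟩

/-- The index tuple `(β, μ, α₃, …, α_{2N})` built from two head indices and a tail `s`. -/
def tupCons2 (m N : ℕ) (β μ : Fin m) (s : Fin (2 * N - 2) → Fin m) :
    Fin (2 * N) → Fin m :=
  fun k =>
    if h0 : (k : ℕ) = 0 then β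
    else if h1 : (k : ℕ) = 1 then μ
    else s ⟨(k : ℕ) - 2, by have := k.isLt; omega⟩

/-- The field strength `F_{λμ} = ∂_λ A_μ − ∂_μ A_λ` of a one-form `A`. -/
noncomputable def Fstr {m : ℕ} (A : Fin m → (Fin m → ℝ) → ℝ) (lam μ : Fin m)
    (q : Fin m → ℝ) : ℝ :=
  partialDeriv (A μ) lam q - partialDeriv (A lam) μ q

/-- The expressions `E_β(c)(τ)` of the relativistic equation. -/
noncomputable def Erel (m N : ℕ) (g : (Fin (2 * N) → Fin m) → (Fin m → ℝ) → ℝ)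
    (A : Fin m → (Fin m → ℝ) → ℝ) (c : ℝ → Fin m → ℝ) (β : Fin m) (τ : ℝ) : ℝ :=
  (∑ μ : Fin m, ∑ t : Fin (2 * N - 1) → Fin m,
      ((1 / (2 * N : ℝ)) * partialDeriv (g (tupCons1 m N μ t)) β (c τ)
          - partialDeriv (g (tupCons1 m N β t)) μ (c τ))
        * deriv c τ μ * ∏ k : Fin (2 * N - 1), deriv c τ (t k))
    - (2 * N - 1 : ℝ) * (∑ μ : Fin m, ∑ s : Fin (2 * N - 2) → Fin m,
        g (tupCons2 m N β μ s) (c τ) * deriv (deriv c) τ μ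
          * ∏ k : Fin (2 * N - 2), deriv c τ (s k))
    + Gfun m N g (c τ) (deriv c τ) ^ (1 - 1 / (2 * N : ℝ))
        * ∑ μ : Fin m, Fstr A β μ (c τ) * deriv c τ μ

/-- The relativistic Lagrangian `L(q,v) = G(q,v)^{1/(2N)} + Σ_μ A_μ(q) v^μ`. -/
noncomputable def Lrel (m N : ℕ) (g : (Fin (2 * N) → Fin m) → (Fin m → ℝ) → ℝ)
    (A : Fin m → (Fin m → ℝ) → ℝ) (q v : Fin m → ℝ) : ℝ :=
  Gfun m N g q v ^ (1 / (2 * N : ℝ)) + ∑ μ : Fin m, A μ q * v μ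

/-- Euler–Lagrange expression `ℰ_λ(c)(τ) = ∂L/∂q^λ(c,c') − d/dτ [∂L/∂v^λ(c,c')]` of a
Lagrangian `L(q,v)` along a curve `c`. -/
noncomputable def eulerLagrange {m : ℕ} (L : (Fin m → ℝ) → (Fin m → ℝ) → ℝ)
    (c : ℝ → Fin m → ℝ) (lam : Fin m) (τ : ℝ) : ℝ :=
  partialDeriv (fun q => L q (deriv c τ)) lam (c τ)
    - deriv (fun s => partialDeriv (fun v => L (c s) v) lam (deriv c s)) τ

/-- A continuous linear functional on `Fin m → ℝ` is determined by its values on the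
standard basis. -/
lemma clm_pi_sum {m : ℕ} (S : (Fin m → ℝ) →L[ℝ] ℝ) (v : Fin m → ℝ) :
    S v = ∑ lam : Fin m, v lam * S (Pi.single lam 1) := by
  conv_lhs => rw [← Finset.univ_sum_single v]
  rw [map_sum]
  apply Finset.sum_congr rfl
  intro lam _
  rw [show (Pi.single lam (v lam) : Fin m → ℝ) = v lam • (Pi.single lam 1 : Fin m → ℝ) by
    funext j
    by_cases h : j = lam <;> simp [Pi.single_apply, h]]
  rw [map_smul, smul_eq_mul]

/-- For the relativistic Lagrangian
`L(q,v) = G(q,v)^{1/(2N)} + Σ_μ A_μ(q) v^μ`, along every smooth curve with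
nowhere-vanishing derivative the Euler–Lagrange expressions satisfy the Noether
identities `Σ_λ c'^λ ℰ_λ = 0`. -/
theorem noether_identities_relativistic_lagrangian
    (m N : ℕ) (hm : 1 ≤ m) (hN : 1 ≤ N)
    (g : (Fin (2 * N) → Fin m) → (Fin m → ℝ) → ℝ)
    (hg : ∀ α, ContDiff ℝ ∞ (g α))
    (hsym : ∀ (α : Fin (2 * N) → Fin m) (σ : Equiv.Perm (Fin (2 * N))), g (α ∘ σ) = g α)
    (hpos : ∀ (q v : Fin m → ℝ), v ≠ 0 → 0 < Gfun m N g q v)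
    (A : Fin m → (Fin m → ℝ) → ℝ) (hA : ∀ μ, ContDiff ℝ ∞ (A μ))
    (c : ℝ → Fin m → ℝ) (hc : ContDiff ℝ 2 c) (hc' : ∀ τ : ℝ, deriv c τ ≠ 0) :
    ∀ τ : ℝ, ∑ lam : Fin m, deriv c τ lam * eulerLagrange (Lrel m N g A) c lam τ = 0 := by
  
  classical
  have h1inf : (1 : WithTop ℕ∞) ≤ ∞ := by exact_mod_cast le_top
  have h2inf : (1 + 1 : WithTop ℕ∞) ≤ ∞ := by
    have h : ((1 + 1 : ℕ∞) : WithTop ℕ∞) ≤ ((⊤ : ℕ∞) : WithTop ℕ∞) := by exact_mod_cast le_top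
    simpa using h
  set F : (Fin m → ℝ) × (Fin m → ℝ) → ℝ := fun x => Lrel m N g A x.1 x.2 with hFdef
  have hproj : ∀ i : Fin m, ContDiff ℝ (∞ : WithTop ℕ∞) (fun v : Fin m → ℝ => v i) :=
    fun i => (ContinuousLinearMap.proj (R := ℝ) (φ := fun _ : Fin m => ℝ) i).contDiff
  -- joint smoothness of G
  have hGF : ContDiff ℝ ∞ (fun x : (Fin m → ℝ) × (Fin m → ℝ) => Gfun m N g x.1 x.2) := by
    unfold Gfun
    apply ContDiff.sum
    intro α _
    exact ((hg α).comp contDiff_fst).mul (contDiff_prod fun k _ =>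
      (hproj (α k)).comp contDiff_snd)
  -- smoothness of F away from v = 0
  have hFsm : ∀ x : (Fin m → ℝ) × (Fin m → ℝ), x.2 ≠ 0 → ContDiffAt ℝ ∞ F x := by
    intro x hx
    have hGx : Gfun m N g x.1 x.2 ≠ 0 := ne_of_gt (hpos _ _ hx)
    apply ContDiffAt.add
    · exact hGF.contDiffAt.rpow_const_of_ne hGx
    · exact (ContDiff.sum fun μ _ => ((hA μ).comp contDiff_fst).mul
        ((hproj μ).comp contDiff_snd)).contDiffAt
  -- positive 1-homogeneity in v
  have hhom : ∀ (q v : Fin m → ℝ), v ≠ 0 → ∀ t : ℝ, 0 < t →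
      Lrel m N g A q (t • v) = t * Lrel m N g A q v := by
    intro q v hv t ht
    have hGt : Gfun m N g q (t • v) = t ^ (2 * N) * Gfun m N g q v := by
      unfold Gfun
      rw [Finset.mul_sum]
      apply Finset.sum_congr rfl
      intro α _
      have h : ∏ k : Fin (2 * N), (t • v) (α k) = t ^ (2 * N) * ∏ k : Fin (2 * N), v (α k) := by
        simp only [Pi.smul_apply, smul_eq_mul]
        rw [Finset.prod_mul_distrib, Finset.prod_const]
        simp
      rw [h]; ring
    have hGpos := hpos q v hv
    unfold Lrel
    rw [hGt]
    have h1 : (t ^ (2 * N) * Gfun m N g q v) ^ (1 / (2 * N : ℝ))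
        = t * Gfun m N g q v ^ (1 / (2 * N : ℝ)) := by
      rw [Real.mul_rpow (by positivity) hGpos.le]
      congr 1
      rw [← Real.rpow_natCast t (2 * N), ← Real.rpow_mul ht.le]
      rw [show ((2 * N : ℕ) : ℝ) * (1 / (2 * N : ℝ)) = 1 by
        have hN0 : (N : ℝ) ≠ 0 := by exact_mod_cast (by omega : N ≠ 0)
        push_cast; field_simp]
      exact Real.rpow_one t
    rw [h1, mul_add, Finset.mul_sum]
    congr 1
    apply Finset.sum_congr rfl
    intro μ _
    simp only [Pi.smul_apply, smul_eq_mul]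
    ring
  -- partial derivatives of F in the two slots
  have hinq : ∀ (q v : Fin m → ℝ), v ≠ 0 →
      HasFDerivAt (fun q' => F (q', v))
        ((fderiv ℝ F (q, v)).comp ((ContinuousLinearMap.id ℝ (Fin m → ℝ)).prod 0)) q := by
    intro q v hv
    have h1 : HasFDerivAt (fun q' : Fin m → ℝ => (q', v))
        ((ContinuousLinearMap.id ℝ (Fin m → ℝ)).prod 0) q :=
      (hasFDerivAt_id q).prodMk (hasFDerivAt_const v q)
    have h2 : HasFDerivAt F (fderiv ℝ F (q, v)) (q, v) :=
      ((hFsm (q, v) hv).differentiableAt (by simp)).hasFDerivAt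
    exact h2.comp q h1
  have hinv : ∀ (q v : Fin m → ℝ), v ≠ 0 →
      HasFDerivAt (fun w => F (q, w))
        ((fderiv ℝ F (q, v)).comp ((0 : (Fin m → ℝ) →L[ℝ] (Fin m → ℝ)).prod
          (ContinuousLinearMap.id ℝ (Fin m → ℝ)))) v := by
    intro q v hv
    have h1 : HasFDerivAt (fun w : Fin m → ℝ => (q, w))
        ((0 : (Fin m → ℝ) →L[ℝ] (Fin m → ℝ)).prod (ContinuousLinearMap.id ℝ (Fin m → ℝ))) v :=
      (hasFDerivAt_const q v).prodMk (hasFDerivAt_id v)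
    have h2 : HasFDerivAt F (fderiv ℝ F (q, v)) (q, v) :=
      ((hFsm (q, v) hv).differentiableAt (by simp)).hasFDerivAt
    exact h2.comp v h1
  -- Euler's identity (from homogeneity)
  have heuler : ∀ (q v : Fin m → ℝ), v ≠ 0 →
      fderiv ℝ F (q, v) ((0 : Fin m → ℝ), v) = F (q, v) := by
    intro q v hv
    have hs : HasDerivAt (fun t : ℝ => t • v) v 1 := by
      simpa using (hasDerivAt_id (1 : ℝ)).smul_const v
    have hD' : HasFDerivAt (fun w => F (q, w))
        ((fderiv ℝ F (q, v)).comp ((0 : (Fin m → ℝ) →L[ℝ] (Fin m → ℝ)).prod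
          (ContinuousLinearMap.id ℝ (Fin m → ℝ)))) ((fun t : ℝ => t • v) 1) := by
      simpa using hinv q v hv
    have h1 : HasDerivAt (fun t : ℝ => F (q, t • v)) (fderiv ℝ F (q, v) (0, v)) 1 := by
      have := hD'.comp_hasDerivAt 1 hs
      exact this
    have h2 : HasDerivAt (fun t : ℝ => t * F (q, v)) (F (q, v)) 1 := by
      simpa using (hasDerivAt_id (1 : ℝ)).mul_const (F (q, v))
    have heq : (fun t : ℝ => F (q, t • v)) =ᶠ[nhds (1 : ℝ)] fun t => t * F (q, v) := by
      filter_upwards [eventually_gt_nhds (zero_lt_one)] with t ht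
      exact hhom q v hv t ht
    exact (heq.hasDerivAt_iff.mp h1).unique h2
  -- curve derivatives
  have hc1 : ContDiff ℝ 1 (deriv c) := by
    have hder : deriv c = fun s => fderiv ℝ c s 1 := funext fun s => fderiv_apply_one_eq_deriv.symm
    rw [hder]
    exact (hc.fderiv_right (by norm_num)).clm_apply contDiff_const
  have hcd : ∀ s, HasDerivAt c (deriv c s) s :=
    fun s => (hc.differentiable (by norm_num) s).hasDerivAt
  have hcdd : ∀ s, HasDerivAt (deriv c) (deriv (deriv c) s) s :=
    fun s => (hc1.differentiable one_ne_zero s).hasDerivAt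
  have hγ : ∀ s, HasDerivAt (fun s => (c s, deriv c s)) (deriv c s, deriv (deriv c) s) s :=
    fun s => (hcd s).prodMk (hcdd s)
  intro τ
  set D : ((Fin m → ℝ) × (Fin m → ℝ)) →L[ℝ] ℝ := fderiv ℝ F (c τ, deriv c τ) with hDdef
  set W : ((Fin m → ℝ) × (Fin m → ℝ)) →L[ℝ] ℝ :=
    fderiv ℝ (fderiv ℝ F) (c τ, deriv c τ) (deriv c τ, deriv (deriv c) τ) with hWdef
  have hΦd : ContDiffAt ℝ 1 (fderiv ℝ F) (c τ, deriv c τ) :=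
    (hFsm (c τ, deriv c τ) (hc' τ)).fderiv_right h2inf
  have hΦ : HasDerivAt (fun s => fderiv ℝ F (c s, deriv c s)) W τ :=
    ((hΦd.differentiableAt one_ne_zero).hasFDerivAt).comp_hasDerivAt τ (hγ τ)
  -- velocity partials along the curve
  have hPfun : ∀ lam : Fin m, (fun s => partialDeriv (fun v => Lrel m N g A (c s) v) lam (deriv c s))
      = fun s => (fderiv ℝ F (c s, deriv c s)) ((0 : Fin m → ℝ), (Pi.single lam 1 : Fin m → ℝ)) := by
    intro lam
    funext s
    unfold partialDeriv
    rw [show (fun v => Lrel m N g A (c s) v) = (fun w => F (c s, w)) from rfl,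
      (hinv (c s) (deriv c s) (hc' s)).fderiv]
    simp
  have hP : ∀ lam : Fin m,
      deriv (fun s => partialDeriv (fun v => Lrel m N g A (c s) v) lam (deriv c s)) τ
        = W ((0 : Fin m → ℝ), Pi.single lam 1) := by
    intro lam
    rw [hPfun lam]
    have h := hΦ.clm_apply (hasDerivAt_const τ ((0 : Fin m → ℝ), (Pi.single lam 1 : Fin m → ℝ)))
    have h' : HasDerivAt (fun s => (fderiv ℝ F (c s, deriv c s))
        ((0 : Fin m → ℝ), (Pi.single lam 1 : Fin m → ℝ))) (W (0, Pi.single lam 1)) τ := by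
      simpa using h
    exact h'.deriv
  -- position partials along the curve
  have hq : ∀ lam : Fin m, partialDeriv (fun q => Lrel m N g A q (deriv c τ)) lam (c τ)
      = D ((Pi.single lam 1 : Fin m → ℝ), (0 : Fin m → ℝ)) := by
    intro lam
    unfold partialDeriv
    rw [show (fun q => Lrel m N g A q (deriv c τ)) = (fun q => F (q, deriv c τ)) from rfl,
      (hinq (c τ) (deriv c τ) (hc' τ)).fderiv]
    simp [hDdef]
  -- differentiate the Euler identity along the curve
  have hE1 : HasDerivAt (fun s => (fderiv ℝ F (c s, deriv c s)) ((0 : Fin m → ℝ), deriv c s))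
      (W ((0 : Fin m → ℝ), deriv c τ) + D ((0 : Fin m → ℝ), deriv (deriv c) τ)) τ := by
    have hu : HasDerivAt (fun s => (((0 : Fin m → ℝ), deriv c s) : (Fin m → ℝ) × (Fin m → ℝ)))
        ((0 : Fin m → ℝ), deriv (deriv c) τ) τ :=
      (hasDerivAt_const τ (0 : Fin m → ℝ)).prodMk (hcdd τ)
    exact hΦ.clm_apply hu
  have hE2 : HasDerivAt (fun s => F (c s, deriv c s))
      (D (deriv c τ, deriv (deriv c) τ)) τ :=
    by have := (((hFsm (c τ, deriv c τ) (hc' τ)).differentiableAt (by simp)).hasFDerivAt).comp_hasDerivAt τ (hγ τ); exact this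
  have heqfun : (fun s => (fderiv ℝ F (c s, deriv c s)) ((0 : Fin m → ℝ), deriv c s))
      = fun s => F (c s, deriv c s) :=
    funext fun s => heuler (c s) (deriv c s) (hc' s)
  have key : W ((0 : Fin m → ℝ), deriv c τ) = D (deriv c τ, (0 : Fin m → ℝ)) := by
    have h := hE1
    rw [heqfun] at h
    have h2 := h.unique hE2
    have h3 : D (deriv c τ, deriv (deriv c) τ) - D ((0 : Fin m → ℝ), deriv (deriv c) τ)
        = D (deriv c τ, (0 : Fin m → ℝ)) := by
      rw [← map_sub]
      congr 1
      simp [Prod.mk_sub_mk]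
    linarith [h2, h3]
  -- sum lemmas
  have hsum1 : ∑ lam : Fin m, deriv c τ lam * D ((Pi.single lam 1 : Fin m → ℝ), (0 : Fin m → ℝ))
      = D (deriv c τ, (0 : Fin m → ℝ)) := by
    have h := clm_pi_sum (D.comp ((ContinuousLinearMap.id ℝ (Fin m → ℝ)).prod 0)) (deriv c τ)
    simpa using h.symm
  have hsum2 : ∑ lam : Fin m, deriv c τ lam * W ((0 : Fin m → ℝ), (Pi.single lam 1 : Fin m → ℝ))
      = W ((0 : Fin m → ℝ), deriv c τ) := by
    have h := clm_pi_sum (W.comp ((0 : (Fin m → ℝ) →L[ℝ] (Fin m → ℝ)).prod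
      (ContinuousLinearMap.id ℝ (Fin m → ℝ)))) (deriv c τ)
    simpa using h.symm
  -- final computation
  have hEL : ∀ lam : Fin m, eulerLagrange (Lrel m N g A) c lam τ
      = D ((Pi.single lam 1 : Fin m → ℝ), (0 : Fin m → ℝ))
        - W ((0 : Fin m → ℝ), (Pi.single lam 1 : Fin m → ℝ)) := by
    intro lam
    unfold eulerLagrange
    rw [hq lam, hP lam]
  rw [Finset.sum_congr rfl fun lam _ => by rw [hEL lam]]
  simp only [mul_sub]
  rw [Finset.sum_sub_distrib, hsum1, hsum2, key, sub_self]
end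

section
/- (Lemma: solutions of the Lagrange equations living on the relativistic constraint solve the relativistic equation.) Let c : ℝ → ℝᵐ be a twice continuously differentiable curve satisfying the Lagrange equations ℰ_λ(c)(τ) = 0 for all λ and all τ, and the relativistic constraint G(c(τ), c'(τ)) = 1 for all τ. Then c satisfies the relativistic equation E_β(c)(τ) = 0 for all β and all τ. -/
open ContDiff

open scoped BigOperators

/-- generic cons for index tuples -/
def consT (n m : ℕ) (μ : Fin m) (t : Fin (n - 1) → Fin m) : Fin n → Fin m :=
  fun k => if h : (k : ℕ) = 0 then μ else t ⟨(k : ℕ) - 1, by have := k.isLt; omega⟩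

lemma consT_zero (n m : ℕ) (hn : 0 < n) (μ : Fin m) (t : Fin (n-1) → Fin m) :
    consT n m μ t ⟨0, hn⟩ = μ := by simp [consT]

lemma consT_succ (n m : ℕ) (μ : Fin m) (t : Fin (n-1) → Fin m) (k : Fin n) (hk : (k:ℕ) ≠ 0) :
    consT n m μ t k = t ⟨(k:ℕ)-1, by have := k.isLt; omega⟩ := by simp [consT, hk]

lemma consT_bijective (n m : ℕ) (hn : 1 ≤ n) :
    Function.Bijective (fun p : Fin m × (Fin (n-1) → Fin m) => consT n m p.1 p.2) := by
  rw [Fintype.bijective_iff_injective_and_card]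
  constructor
  · rintro ⟨μ, t⟩ ⟨μ', t'⟩ h
    simp only [Prod.mk.injEq]
    constructor
    · have := congrFun h ⟨0, hn⟩
      simpa [consT] using this
    · funext k
      have := congrFun h ⟨(k:ℕ)+1, by have := k.isLt; omega⟩
      simpa [consT] using this
  · simp only [Fintype.card_prod, Fintype.card_fun, Fintype.card_fin]
    conv_rhs => rw [show n = (n-1)+1 by omega]
    rw [pow_succ]; ring

lemma sum_consT (n m : ℕ) (hn : 1 ≤ n) (F : (Fin n → Fin m) → ℝ) :
    ∑ α : Fin n → Fin m, F α
      = ∑ μ : Fin m, ∑ t : Fin (n-1) → Fin m, F (consT n m μ t) := by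
  have h : ∑ p : Fin m × (Fin (n-1) → Fin m), F (consT n m p.1 p.2) = ∑ α, F α :=
    Fintype.sum_bijective (fun p : Fin m × (Fin (n-1) → Fin m) => consT n m p.1 p.2)
      (consT_bijective n m hn) _ F (fun p => rfl)
  rw [← h]
  exact Fintype.sum_prod_type (f := fun p => F (consT n m p.1 p.2))

lemma prod_consT_erase (n m : ℕ) (hn : 1 ≤ n) (v : Fin m → ℝ) (μ : Fin m)
    (t : Fin (n-1) → Fin m) :
    ∏ j ∈ Finset.univ.erase (⟨0, hn⟩ : Fin n), v (consT n m μ t j)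
      = ∏ k : Fin (n-1), v (t k) := by
  apply Finset.prod_bij (fun (j : Fin n) (hj : j ∈ Finset.univ.erase (⟨0,hn⟩ : Fin n)) =>
    (⟨(j:ℕ)-1, by
      have h1 := j.isLt
      have h2 : (j:ℕ) ≠ 0 := by simpa [Fin.ext_iff] using Finset.ne_of_mem_erase hj
      omega⟩ : Fin (n-1)))
  · intro a ha; exact Finset.mem_univ _
  · intro a ha b hb hab
    have ha' : (a:ℕ) ≠ 0 := by simpa [Fin.ext_iff] using Finset.ne_of_mem_erase ha
    have hb' : (b:ℕ) ≠ 0 := by simpa [Fin.ext_iff] using Finset.ne_of_mem_erase hb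
    have := congrArg Fin.val hab
    simp only at this
    exact Fin.ext (by omega)
  · intro b _
    refine ⟨⟨(b:ℕ)+1, by have := b.isLt; omega⟩, ?_, ?_⟩
    · simp [Finset.mem_erase, Fin.ext_iff]
    · exact Fin.ext (by simp)
  · intro a ha
    have ha' : (a:ℕ) ≠ 0 := by simpa [Fin.ext_iff] using Finset.ne_of_mem_erase ha
    rw [consT_succ n m μ t a ha']

/-- auxiliary map extending `f : Fin (n-1) → Fin (n-1)` to `Fin n`, fixing `0`. -/
def pcAux (n : ℕ) (f : Fin (n-1) → Fin (n-1)) : Fin n → Fin n := fun k =>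
  if h : (k : ℕ) = 0 then k else
    ⟨(f ⟨(k:ℕ)-1, by have := k.isLt; omega⟩ : ℕ) + 1, by
      have h1 := k.isLt
      have h2 := (f ⟨(k:ℕ)-1, by have := k.isLt; omega⟩).isLt
      omega⟩

lemma pcAux_apply_ne (n : ℕ) (f : Fin (n-1) → Fin (n-1)) (k : Fin n) (h : (k:ℕ) ≠ 0) :
    pcAux n f k = ⟨(f ⟨(k:ℕ)-1, by have := k.isLt; omega⟩ : ℕ) + 1, by
      have h1 := k.isLt
      have h2 := (f ⟨(k:ℕ)-1, by have := k.isLt; omega⟩).isLt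
      omega⟩ := dif_neg h

lemma pcAux_comp (n : ℕ) (f g : Fin (n-1) → Fin (n-1)) (hfg : ∀ x, f (g x) = x) :
    ∀ k, pcAux n f (pcAux n g k) = k := by
  intro k
  by_cases h : (k : ℕ) = 0
  · have hk0 : pcAux n g k = k := dif_pos h
    rw [hk0]
    exact dif_pos h
  · rw [pcAux_apply_ne n g k h]
    rw [pcAux_apply_ne n f _ (by simp)]
    apply Fin.ext
    simp only [Fin.val_mk]
    have : (⟨(g ⟨(k:ℕ)-1, by have := k.isLt; omega⟩ : ℕ) + 1 - 1, by
        have := (g ⟨(k:ℕ)-1, by have := k.isLt; omega⟩).isLt; omega⟩ : Fin (n-1))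
        = g ⟨(k:ℕ)-1, by have := k.isLt; omega⟩ := by
      apply Fin.ext; simp
    rw [this, hfg]
    simp only [Fin.val_mk]
    have := k.isLt
    omega

/-- extend a permutation of `Fin (n-1)` to one of `Fin n` fixing `0`. -/
def permCons (n : ℕ) (σ : Equiv.Perm (Fin (n-1))) : Equiv.Perm (Fin n) where
  toFun := pcAux n σ
  invFun := pcAux n σ.symm
  left_inv := pcAux_comp n σ.symm σ (fun x => σ.symm_apply_apply x)
  right_inv := pcAux_comp n σ σ.symm (fun x => σ.apply_symm_apply x)

lemma consT_apply_zero (n m : ℕ) (μ : Fin m) (t : Fin (n-1) → Fin m) (k : Fin n)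
    (h : (k:ℕ) = 0) : consT n m μ t k = μ := dif_pos h

lemma consT_tail_perm (n m : ℕ) (μ : Fin m) (t : Fin (n-1) → Fin m)
    (σ : Equiv.Perm (Fin (n-1))) :
    consT n m μ (t ∘ σ) = (consT n m μ t) ∘ (permCons n σ) := by
  funext k
  show consT n m μ (t ∘ σ) k = consT n m μ t (permCons n σ k)
  by_cases h : (k : ℕ) = 0
  · have h2 : permCons n σ k = k := dif_pos h
    rw [h2, consT_apply_zero n m μ (t ∘ σ) k h, consT_apply_zero n m μ t k h]
  · have h2 : permCons n σ k = ⟨(σ ⟨(k:ℕ)-1, by have := k.isLt; omega⟩ : ℕ) + 1, by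
        have h1 := k.isLt
        have h2 := (σ ⟨(k:ℕ)-1, by have := k.isLt; omega⟩).isLt
        omega⟩ := pcAux_apply_ne n σ k h
    rw [consT_succ n m μ (t ∘ σ) k h, h2, consT_succ n m μ t _ (by simp)]
    simp only [Function.comp_apply]
    congr 1

lemma collapse (n m : ℕ) (hn : 1 ≤ n) (G : (Fin n → Fin m) → ℝ)
    (hs : ∀ (α : Fin n → Fin m) (σ : Equiv.Perm (Fin n)), G (α ∘ σ) = G α)
    (v w : Fin m → ℝ) :
    ∑ α : Fin n → Fin m, G α * ∑ k : Fin n, w (α k) * ∏ j ∈ Finset.univ.erase k, v (α j)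
      = (n : ℝ) * ∑ μ : Fin m, ∑ t : Fin (n-1) → Fin m,
          G (consT n m μ t) * (w μ * ∏ j : Fin (n-1), v (t j)) := by
  set k0 : Fin n := ⟨0, hn⟩ with hk0
  have key : ∀ k : Fin n,
      (∑ α : Fin n → Fin m, G α * (w (α k) * ∏ j ∈ Finset.univ.erase k, v (α j)))
        = ∑ α : Fin n → Fin m, G α * (w (α k0) * ∏ j ∈ Finset.univ.erase k0, v (α j)) := by
    intro k
    set σ : Equiv.Perm (Fin n) := Equiv.swap k0 k with hσ
    have he : Function.Bijective (fun α : Fin n → Fin m => α ∘ σ) := by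
      constructor
      · intro a b hab
        funext x
        have := congrFun hab (σ.symm x)
        simpa using this
      · intro b
        exact ⟨b ∘ ⇑σ.symm, by funext x; simp⟩
    refine (Fintype.sum_bijective (fun α : Fin n → Fin m => α ∘ σ) he _ _ ?_).symm
    intro α
    have h1 : G (α ∘ σ) = G α := hs α σ
    have h2 : (α ∘ σ) k = α k0 := by
      simp only [Function.comp_apply, hσ, Equiv.swap_apply_right]
    have h3 : (∏ j ∈ Finset.univ.erase k, v ((α ∘ σ) j))
        = ∏ j ∈ Finset.univ.erase k0, v (α j) := by
      apply Finset.prod_bij (fun (j : Fin n) (_ : j ∈ Finset.univ.erase k) => σ j)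
      · intro a ha
        simp only [Finset.mem_erase, Finset.mem_univ, and_true] at ha ⊢
        intro hcon
        apply ha
        have : a = σ.symm k0 := by rw [← hcon]; simp
        rw [this, hσ, Equiv.symm_swap, Equiv.swap_apply_left]
      · intro a _ b _ hab
        exact σ.injective hab
      · intro b hb
        simp only [Finset.mem_erase, Finset.mem_univ, and_true] at hb
        refine ⟨σ.symm b, ?_, by simp⟩
        simp only [Finset.mem_erase, Finset.mem_univ, and_true]
        intro hcon
        apply hb
        have : b = σ k := by rw [← hcon]; simp
        rw [this, hσ, Equiv.swap_apply_right]
      · intro a _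
        rfl
    show G α * (w (α k0) * ∏ j ∈ Finset.univ.erase k0, v (α j))
        = G (α ∘ ⇑σ) * (w ((α ∘ ⇑σ) k) * ∏ j ∈ Finset.univ.erase k, v ((α ∘ ⇑σ) j))
    rw [h1, h2, h3]
  calc ∑ α : Fin n → Fin m, G α * ∑ k : Fin n, w (α k) * ∏ j ∈ Finset.univ.erase k, v (α j)
      = ∑ k : Fin n, ∑ α : Fin n → Fin m,
          G α * (w (α k) * ∏ j ∈ Finset.univ.erase k, v (α j)) := by
        rw [Finset.sum_comm]
        apply Finset.sum_congr rfl
        intro α _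
        rw [Finset.mul_sum]
    _ = ∑ _k : Fin n, ∑ α : Fin n → Fin m,
          G α * (w (α k0) * ∏ j ∈ Finset.univ.erase k0, v (α j)) :=
        Finset.sum_congr rfl (fun k _ => key k)
    _ = (n : ℝ) * ∑ α : Fin n → Fin m,
          G α * (w (α k0) * ∏ j ∈ Finset.univ.erase k0, v (α j)) := by
        rw [Finset.sum_const, Finset.card_univ, Fintype.card_fin, nsmul_eq_mul]
    _ = (n : ℝ) * ∑ μ : Fin m, ∑ t : Fin (n-1) → Fin m,
          G (consT n m μ t) * (w μ * ∏ j : Fin (n-1), v (t j)) := by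
        congr 1
        rw [sum_consT n m hn]
        apply Finset.sum_congr rfl; intro μ _
        apply Finset.sum_congr rfl; intro t _
        rw [consT_zero n m hn, prod_consT_erase n m hn]


lemma collapse_single (n m : ℕ) (hn : 1 ≤ n) (G : (Fin n → Fin m) → ℝ)
    (hs : ∀ (α : Fin n → Fin m) (σ : Equiv.Perm (Fin n)), G (α ∘ σ) = G α)
    (v : Fin m → ℝ) (β : Fin m) :
    ∑ α : Fin n → Fin m, G α * ∑ k : Fin n,
        (Pi.single β 1 : Fin m → ℝ) (α k) * ∏ j ∈ Finset.univ.erase k, v (α j)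
      = (n : ℝ) * ∑ t : Fin (n-1) → Fin m, G (consT n m β t) * ∏ j : Fin (n-1), v (t j) := by
  rw [collapse n m hn G hs v (Pi.single β 1 : Fin m → ℝ)]
  congr 1
  rw [Finset.sum_eq_single β]
  · apply Finset.sum_congr rfl; intro t _; simp
  · intro b _ hb
    apply Finset.sum_eq_zero; intro t _
    simp [Pi.single_eq_of_ne hb]
  · intro h; exact absurd (Finset.mem_univ β) h

lemma partialDeriv_hasFDeriv {m : ℕ} {f : (Fin m → ℝ) → ℝ} {D : (Fin m → ℝ) →L[ℝ] ℝ}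
    {q : Fin m → ℝ} (h : HasFDerivAt f D q) (β : Fin m) :
    partialDeriv f β q = D (Pi.single β 1) := by
  rw [partialDeriv, h.fderiv]

lemma pi_decomp {m : ℕ} (u : Fin m → ℝ) :
    u = ∑ μ : Fin m, u μ • (Pi.single μ 1 : Fin m → ℝ) := by
  funext j
  rw [Finset.sum_apply]
  simp [Pi.single_apply]

lemma clm_apply_sum {m : ℕ} (D : (Fin m → ℝ) →L[ℝ] ℝ) (u : Fin m → ℝ) :
    D u = ∑ μ, u μ * D (Pi.single μ 1) := by
  conv_lhs => rw [pi_decomp u]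
  rw [map_sum]
  simp [smul_eq_mul]

lemma hasDerivAt_comp_curve {m : ℕ} (f : (Fin m → ℝ) → ℝ) (hf : Differentiable ℝ f)
    (c : ℝ → Fin m → ℝ) (τ : ℝ) (c' : Fin m → ℝ) (hcd : HasDerivAt c c' τ) :
    HasDerivAt (fun s => f (c s)) (∑ μ, partialDeriv f μ (c τ) * c' μ) τ := by
  have h := (hf (c τ)).hasFDerivAt.comp_hasDerivAt τ hcd
  refine h.congr_deriv ?_
  rw [clm_apply_sum]
  exact Finset.sum_congr rfl (fun μ _ => by rw [partialDeriv, mul_comm])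

lemma hasFDerivAt_prod_coords {m n : ℕ} (α : Fin n → Fin m) (v : Fin m → ℝ) :
    HasFDerivAt (fun v : Fin m → ℝ => ∏ k : Fin n, v (α k))
      (∑ k : Fin n, (∏ j ∈ Finset.univ.erase k, v (α j)) •
        (ContinuousLinearMap.proj (α k) : (Fin m → ℝ) →L[ℝ] ℝ)) v :=
  HasFDerivAt.finset_prod (fun k _ =>
    (ContinuousLinearMap.proj (α k) : (Fin m → ℝ) →L[ℝ] ℝ).hasFDerivAt)

lemma hasFDerivAt_Gfun_v (m N : ℕ) (g : (Fin (2 * N) → Fin m) → (Fin m → ℝ) → ℝ)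
    (q v : Fin m → ℝ) :
    HasFDerivAt (fun v => Gfun m N g q v)
      (∑ α : Fin (2*N) → Fin m, g α q •
        ∑ k : Fin (2*N), (∏ j ∈ Finset.univ.erase k, v (α j)) •
          (ContinuousLinearMap.proj (α k) : (Fin m → ℝ) →L[ℝ] ℝ)) v :=
  HasFDerivAt.fun_sum (fun α _ => (hasFDerivAt_prod_coords α v).const_mul (g α q))

lemma hasFDerivAt_Gfun_q (m N : ℕ) (g : (Fin (2 * N) → Fin m) → (Fin m → ℝ) → ℝ)
    (hg : ∀ α, ContDiff ℝ ∞ (g α)) (q v : Fin m → ℝ) :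
    HasFDerivAt (fun q => Gfun m N g q v)
      (∑ α : Fin (2*N) → Fin m, (∏ k : Fin (2*N), v (α k)) • fderiv ℝ (g α) q) q :=
  HasFDerivAt.fun_sum (fun α _ =>
    (((hg α).differentiable (by simp)) q).hasFDerivAt.mul_const _)

lemma hasFDerivAt_linear_v (m : ℕ) (a : Fin m → ℝ) (v : Fin m → ℝ) :
    HasFDerivAt (fun v : Fin m → ℝ => ∑ μ, a μ * v μ)
      (∑ μ, a μ • (ContinuousLinearMap.proj μ : (Fin m → ℝ) →L[ℝ] ℝ)) v :=
  HasFDerivAt.fun_sum (fun μ _ =>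
    ((ContinuousLinearMap.proj μ : (Fin m → ℝ) →L[ℝ] ℝ)).hasFDerivAt.const_mul (a μ))

lemma linear_eval {m : ℕ} (a : Fin m → ℝ) (β : Fin m) :
    (∑ μ, a μ • (ContinuousLinearMap.proj μ : (Fin m → ℝ) →L[ℝ] ℝ))
      (Pi.single β 1 : Fin m → ℝ) = a β := by
  simp only [ContinuousLinearMap.sum_apply, ContinuousLinearMap.smul_apply,
    ContinuousLinearMap.proj_apply, smul_eq_mul, Pi.single_apply]
  simp

lemma partialDeriv_Gfun_v (m N : ℕ) (hN : 1 ≤ N)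
    (g : (Fin (2 * N) → Fin m) → (Fin m → ℝ) → ℝ)
    (hsym : ∀ (α : Fin (2*N) → Fin m) (σ : Equiv.Perm (Fin (2*N))), g (α ∘ σ) = g α)
    (q v : Fin m → ℝ) (β : Fin m) :
    partialDeriv (fun v => Gfun m N g q v) β v
      = ((2*N : ℕ) : ℝ) * ∑ t : Fin (2*N-1) → Fin m,
          g (consT (2*N) m β t) q * ∏ j : Fin (2*N-1), v (t j) := by
  rw [partialDeriv_hasFDeriv (hasFDerivAt_Gfun_v m N g q v) β]
  simp only [ContinuousLinearMap.sum_apply, ContinuousLinearMap.smul_apply,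
    ContinuousLinearMap.proj_apply, smul_eq_mul]
  rw [← collapse_single (2*N) m (by omega) (fun α => g α q)
    (fun α σ => congrFun (hsym α σ) q) v β]
  apply Finset.sum_congr rfl; intro α _
  congr 1
  apply Finset.sum_congr rfl; intro k _
  ring

lemma partialDeriv_Gfun_q (m N : ℕ)
    (g : (Fin (2 * N) → Fin m) → (Fin m → ℝ) → ℝ) (hg : ∀ α, ContDiff ℝ ∞ (g α))
    (q v : Fin m → ℝ) (β : Fin m) :
    partialDeriv (fun q => Gfun m N g q v) β q
      = ∑ α : Fin (2*N) → Fin m, partialDeriv (g α) β q * ∏ k : Fin (2*N), v (α k) := by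
  rw [partialDeriv_hasFDeriv (hasFDerivAt_Gfun_q m N g hg q v) β]
  simp only [ContinuousLinearMap.sum_apply, ContinuousLinearMap.smul_apply, smul_eq_mul]
  exact Finset.sum_congr rfl (fun α _ => by rw [partialDeriv]; ring)

lemma partialDeriv_Lrel_v (m N : ℕ) (hN : 1 ≤ N)
    (g : (Fin (2 * N) → Fin m) → (Fin m → ℝ) → ℝ)
    (hsym : ∀ (α : Fin (2*N) → Fin m) (σ : Equiv.Perm (Fin (2*N))), g (α ∘ σ) = g α)
    (A : Fin m → (Fin m → ℝ) → ℝ) (q v : Fin m → ℝ) (β : Fin m)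
    (hG1 : Gfun m N g q v = 1) :
    partialDeriv (fun v => Gfun m N g q v ^ (1/(2*(N:ℝ))) + ∑ μ, A μ q * v μ) β v
      = (∑ t : Fin (2*N-1) → Fin m,
          g (consT (2*N) m β t) q * ∏ j : Fin (2*N-1), v (t j)) + A β q := by
  have hG := hasFDerivAt_Gfun_v m N g q v
  have hpow := hG.rpow_const (p := 1/(2*(N:ℝ))) (Or.inl (by show Gfun m N g q v ≠ 0; rw [hG1]; norm_num))
  have hlin := hasFDerivAt_linear_v m (fun μ => A μ q) v
  rw [partialDeriv_hasFDeriv (hpow.fun_add hlin) β]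
  rw [ContinuousLinearMap.add_apply, ContinuousLinearMap.smul_apply, linear_eval]
  congr 1
  have hD : (∑ α : Fin (2*N) → Fin m, g α q •
        ∑ k : Fin (2*N), (∏ j ∈ Finset.univ.erase k, v (α j)) •
          (ContinuousLinearMap.proj (α k) : (Fin m → ℝ) →L[ℝ] ℝ))
        (Pi.single β 1 : Fin m → ℝ)
      = ((2*N : ℕ) : ℝ) * ∑ t : Fin (2*N-1) → Fin m,
          g (consT (2*N) m β t) q * ∏ j : Fin (2*N-1), v (t j) := by
    rw [← partialDeriv_hasFDeriv hG β, partialDeriv_Gfun_v m N hN g hsym q v β]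
  rw [smul_eq_mul, hD]
  show (1/(2*(N:ℝ)) * Gfun m N g q v ^ (1/(2*(N:ℝ)) - 1)) * _ = _
  rw [hG1, Real.one_rpow]
  have hNne : (2*(N:ℝ)) ≠ 0 := by
    have : (1:ℝ) ≤ (N:ℝ) := by exact_mod_cast hN
    positivity
  push_cast
  field_simp

lemma hasFDerivAt_linear_q {m : ℕ} (A : Fin m → (Fin m → ℝ) → ℝ)
    (hA : ∀ μ, ContDiff ℝ ∞ (A μ)) (v q : Fin m → ℝ) :
    HasFDerivAt (fun q => ∑ μ, A μ q * v μ)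
      (∑ μ, (v μ) • fderiv ℝ (A μ) q) q :=
  HasFDerivAt.fun_sum (fun μ _ =>
    (((hA μ).differentiable (by simp)) q).hasFDerivAt.mul_const _)

lemma partialDeriv_Lrel_q (m N : ℕ) (hN : 1 ≤ N)
    (g : (Fin (2 * N) → Fin m) → (Fin m → ℝ) → ℝ) (hg : ∀ α, ContDiff ℝ ∞ (g α))
    (A : Fin m → (Fin m → ℝ) → ℝ) (hA : ∀ μ, ContDiff ℝ ∞ (A μ))
    (q v : Fin m → ℝ) (β : Fin m) (hG1 : Gfun m N g q v = 1) :
    partialDeriv (fun q => Gfun m N g q v ^ (1/(2*(N:ℝ))) + ∑ μ, A μ q * v μ) β q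
      = (1/(2*(N:ℝ))) * (∑ α : Fin (2*N) → Fin m,
            partialDeriv (g α) β q * ∏ k : Fin (2*N), v (α k))
        + ∑ μ, partialDeriv (A μ) β q * v μ := by
  have hG := hasFDerivAt_Gfun_q m N g hg q v
  have hpow := hG.rpow_const (p := 1/(2*(N:ℝ))) (Or.inl (by show Gfun m N g q v ≠ 0; rw [hG1]; norm_num))
  have hlin := hasFDerivAt_linear_q A hA v q
  rw [partialDeriv_hasFDeriv (hpow.fun_add hlin) β]
  rw [ContinuousLinearMap.add_apply, ContinuousLinearMap.smul_apply]
  congr 1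
  · have hD : (∑ α : Fin (2*N) → Fin m, (∏ k : Fin (2*N), v (α k)) • fderiv ℝ (g α) q)
        (Pi.single β 1 : Fin m → ℝ)
        = ∑ α : Fin (2*N) → Fin m, partialDeriv (g α) β q * ∏ k : Fin (2*N), v (α k) := by
      rw [← partialDeriv_hasFDeriv hG β, partialDeriv_Gfun_q m N g hg q v β]
    rw [smul_eq_mul, hD]
    show (1/(2*(N:ℝ)) * Gfun m N g q v ^ (1/(2*(N:ℝ)) - 1)) * _ = _
    rw [hG1, Real.one_rpow, mul_one]
  · simp only [ContinuousLinearMap.sum_apply, ContinuousLinearMap.smul_apply, smul_eq_mul]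
    exact Finset.sum_congr rfl (fun μ _ => by rw [partialDeriv]; ring)

lemma hasDerivAt_Tfun (m N : ℕ)
    (g : (Fin (2 * N) → Fin m) → (Fin m → ℝ) → ℝ) (hg : ∀ α, ContDiff ℝ ∞ (g α))
    (β : Fin m) (c : ℝ → Fin m → ℝ) (τ : ℝ)
    (hcd : HasDerivAt c (deriv c τ) τ)
    (hc1 : HasDerivAt (deriv c) (deriv (deriv c) τ) τ) :
    HasDerivAt (fun s => ∑ t : Fin (2*N-1) → Fin m,
        g (consT (2*N) m β t) (c s) * ∏ j : Fin (2*N-1), deriv c s (t j))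
      (∑ t : Fin (2*N-1) → Fin m,
        ((∑ μ, partialDeriv (g (consT (2*N) m β t)) μ (c τ) * deriv c τ μ)
            * ∏ j : Fin (2*N-1), deriv c τ (t j)
          + g (consT (2*N) m β t) (c τ)
            * ∑ k : Fin (2*N-1), deriv (deriv c) τ (t k)
                * ∏ j ∈ Finset.univ.erase k, deriv c τ (t j))) τ := by
  apply HasDerivAt.fun_sum
  intro t _
  have h1 : HasDerivAt (fun s => g (consT (2*N) m β t) (c s))
      (∑ μ, partialDeriv (g (consT (2*N) m β t)) μ (c τ) * deriv c τ μ) τ :=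
    hasDerivAt_comp_curve _ ((hg _).differentiable (by simp)) c τ _ hcd
  have h2 : HasDerivAt (fun s => ∏ j : Fin (2*N-1), deriv c s (t j))
      (∑ k : Fin (2*N-1), (∏ j ∈ Finset.univ.erase k, deriv c τ (t j)) •
        deriv (deriv c) τ (t k)) τ :=
    HasDerivAt.fun_finsetProd (fun k _ => (hasDerivAt_pi.mp hc1) (t k))
  have := h1.fun_mul h2
  convert this using 1
  congr 1
  congr 1
  congr 1
  apply Finset.sum_congr rfl
  intro k _
  simp only [smul_eq_mul]
  exact mul_comm _ _

lemma prod_consT_full (n m : ℕ) (hn : 1 ≤ n) (v : Fin m → ℝ) (μ : Fin m)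
    (t : Fin (n-1) → Fin m) :
    ∏ k : Fin n, v (consT n m μ t k) = v μ * ∏ j : Fin (n-1), v (t j) := by
  rw [← Finset.mul_prod_erase Finset.univ _ (Finset.mem_univ (⟨0,hn⟩ : Fin n))]
  rw [consT_zero n m hn, prod_consT_erase n m hn]

lemma tupCons2_eq (m N : ℕ) (hN : 1 ≤ N) (β μ : Fin m) (s : Fin (2*N-2) → Fin m) :
    tupCons2 m N β μ s = consT (2*N) m β (consT (2*N-1) m μ s) := by
  funext k
  by_cases h0 : (k:ℕ) = 0
  · rw [consT_apply_zero (2*N) m β _ k h0]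
    simp [tupCons2, h0]
  · rw [consT_succ (2*N) m β _ k h0]
    by_cases h1 : (k:ℕ) = 1
    · have hz : ((⟨(k:ℕ)-1, by have := k.isLt; omega⟩ : Fin (2*N-1)) : ℕ) = 0 := by
        simp [h1]
      rw [consT_apply_zero (2*N-1) m μ s _ hz]
      simp [tupCons2, h0, h1]
    · have hz : ((⟨(k:ℕ)-1, by have := k.isLt; omega⟩ : Fin (2*N-1)) : ℕ) ≠ 0 := by
        simp; omega
      rw [consT_succ (2*N-1) m μ s _ hz]
      simp only [tupCons2, h0, h1, dif_neg, not_false_iff]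
      congr 1

/-- Lemma: any C² solution of the Lagrange equations `ℰ_λ = 0` living on
the relativistic constraint surface `G(c,c') = 1` is a solution of the relativistic
equation `E_β = 0`. -/
theorem lagrange_on_constraint_solves_relativistic_equation
    (m N : ℕ) (hm : 1 ≤ m) (hN : 1 ≤ N)
    (g : (Fin (2 * N) → Fin m) → (Fin m → ℝ) → ℝ)
    (hg : ∀ α, ContDiff ℝ ∞ (g α))
    (hsym : ∀ (α : Fin (2 * N) → Fin m) (σ : Equiv.Perm (Fin (2 * N))), g (α ∘ σ) = g α)
    (hpos : ∀ (q v : Fin m → ℝ), v ≠ 0 → 0 < Gfun m N g q v)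
    (A : Fin m → (Fin m → ℝ) → ℝ) (hA : ∀ μ, ContDiff ℝ ∞ (A μ))
    (c : ℝ → Fin m → ℝ) (hc : ContDiff ℝ 2 c)
    (hEL : ∀ (lam : Fin m) (τ : ℝ), eulerLagrange (Lrel m N g A) c lam τ = 0)
    (hconstr : ∀ τ : ℝ, Gfun m N g (c τ) (deriv c τ) = 1) :
    ∀ (β : Fin m) (τ : ℝ), Erel m N g A c β τ = 0 := by
  intro β τ
  have h2N : 1 ≤ 2*N := by omega
  have h2N' : 1 ≤ 2*N-1 := by omega
  -- smoothness of c
  obtain ⟨hcdiff, -, hc1⟩ := contDiff_succ_iff_deriv.mp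
    (show ContDiff ℝ (1+1) c by
      have h12 : ((1:WithTop ℕ∞) + 1) = 2 := by norm_num
      rw [h12]; exact hc)
  have hc1d : Differentiable ℝ (deriv c) := hc1.differentiable (by simp)
  have hcdAt : ∀ s, HasDerivAt c (deriv c s) s := fun s => (hcdiff s).hasDerivAt
  have hc1At : ∀ s, HasDerivAt (deriv c) (deriv (deriv c) s) s := fun s => (hc1d s).hasDerivAt
  -- Euler–Lagrange instance
  have hEL' := hEL β τ
  simp only [eulerLagrange, Lrel] at hEL'
  rw [partialDeriv_Lrel_q m N hN g hg A hA (c τ) (deriv c τ) β (hconstr τ)] at hEL'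
  have hPfun : (fun s => partialDeriv
        (fun v => Gfun m N g (c s) v ^ (1/(2*(N:ℝ))) + ∑ μ, A μ (c s) * v μ) β (deriv c s))
      = fun s => (∑ t : Fin (2*N-1) → Fin m,
          g (consT (2*N) m β t) (c s) * ∏ j : Fin (2*N-1), deriv c s (t j)) + A β (c s) := by
    funext s
    exact partialDeriv_Lrel_v m N hN g hsym A (c s) (deriv c s) β (hconstr s)
  rw [hPfun] at hEL'
  have hTder := hasDerivAt_Tfun m N g hg β c τ (hcdAt τ) (hc1At τ)
  have hAder : HasDerivAt (fun s => A β (c s))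
      (∑ μ, partialDeriv (A β) μ (c τ) * deriv c τ μ) τ :=
    hasDerivAt_comp_curve _ ((hA β).differentiable (by simp)) c τ _ (hcdAt τ)
  have hder : deriv (fun s => (∑ t : Fin (2*N-1) → Fin m,
        g (consT (2*N) m β t) (c s) * ∏ j : Fin (2*N-1), deriv c s (t j)) + A β (c s)) τ
      = (∑ t : Fin (2*N-1) → Fin m,
          ((∑ μ, partialDeriv (g (consT (2*N) m β t)) μ (c τ) * deriv c τ μ)
              * ∏ j : Fin (2*N-1), deriv c τ (t j)
            + g (consT (2*N) m β t) (c τ)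
              * ∑ k : Fin (2*N-1), deriv (deriv c) τ (t k)
                  * ∏ j ∈ Finset.univ.erase k, deriv c τ (t j)))
        + ∑ μ, partialDeriv (A β) μ (c τ) * deriv c τ μ := (hTder.add hAder).deriv
  rw [hder] at hEL'
  -- reindex the q-derivative sum
  rw [sum_consT (2*N) m h2N
    (fun α => partialDeriv (g α) β (c τ) * ∏ k : Fin (2*N), deriv c τ (α k))] at hEL'
  simp only [prod_consT_full (2*N) m h2N (deriv c τ)] at hEL'
  -- split the sum in the time derivative
  rw [Finset.sum_add_distrib] at hEL'
  -- collapse the second-derivative term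
  have hcol : (∑ t : Fin (2*N-1) → Fin m, g (consT (2*N) m β t) (c τ)
        * ∑ k : Fin (2*N-1), deriv (deriv c) τ (t k)
            * ∏ j ∈ Finset.univ.erase k, deriv c τ (t j))
      = ((2*N-1 : ℕ) : ℝ) * ∑ μ : Fin m, ∑ s : Fin (2*N-2) → Fin m,
          g (consT (2*N) m β (consT (2*N-1) m μ s)) (c τ)
            * (deriv (deriv c) τ μ * ∏ j : Fin (2*N-2), deriv c τ (s j)) :=
    collapse (2*N-1) m h2N' (fun t => g (consT (2*N) m β t) (c τ))
      (fun t σ => by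
        show g (consT (2*N) m β (t ∘ ⇑σ)) (c τ) = g (consT (2*N) m β t) (c τ)
        rw [consT_tail_perm (2*N) m β t σ]
        exact congrFun (hsym _ _) (c τ))
      (deriv c τ) (deriv (deriv c) τ)
  rw [hcol] at hEL'
  -- reshape the cross term
  have hcross : (∑ t : Fin (2*N-1) → Fin m,
        (∑ μ, partialDeriv (g (consT (2*N) m β t)) μ (c τ) * deriv c τ μ)
          * ∏ j : Fin (2*N-1), deriv c τ (t j))
      = ∑ μ : Fin m, ∑ t : Fin (2*N-1) → Fin m,
          partialDeriv (g (consT (2*N) m β t)) μ (c τ)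
            * (deriv c τ μ * ∏ j : Fin (2*N-1), deriv c τ (t j)) := by
    simp only [Finset.sum_mul]
    rw [Finset.sum_comm]
    exact Finset.sum_congr rfl (fun μ _ => Finset.sum_congr rfl (fun t _ => by ring))
  rw [hcross] at hEL'
  rw [show ((2*N-1:ℕ):ℝ) = 2*(N:ℝ)-1 by rw [Nat.cast_sub h2N]; push_cast; ring] at hEL'
  -- now rewrite the goal
  have htup1 : tupCons1 m N = consT (2*N) m := rfl
  simp only [Erel, Fstr, htup1, tupCons2_eq m N hN, hconstr τ, Real.one_rpow]
  have hchunk1 : (∑ μ : Fin m, ∑ t : Fin (2*N-1) → Fin m,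
        ((1/(2*(N:ℝ))) * partialDeriv (g (consT (2*N) m μ t)) β (c τ)
            - partialDeriv (g (consT (2*N) m β t)) μ (c τ))
          * deriv c τ μ * ∏ k : Fin (2*N-1), deriv c τ (t k))
      = (1/(2*(N:ℝ))) * (∑ μ : Fin m, ∑ t : Fin (2*N-1) → Fin m,
            partialDeriv (g (consT (2*N) m μ t)) β (c τ)
              * (deriv c τ μ * ∏ j : Fin (2*N-1), deriv c τ (t j)))
        - ∑ μ : Fin m, ∑ t : Fin (2*N-1) → Fin m,
            partialDeriv (g (consT (2*N) m β t)) μ (c τ)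
              * (deriv c τ μ * ∏ j : Fin (2*N-1), deriv c τ (t j)) := by
    rw [Finset.mul_sum, ← Finset.sum_sub_distrib]
    apply Finset.sum_congr rfl; intro μ _
    rw [Finset.mul_sum, ← Finset.sum_sub_distrib]
    apply Finset.sum_congr rfl; intro t _
    ring
  have hchunk2 : (∑ μ : Fin m, ∑ s : Fin (2*N-2) → Fin m,
        g (consT (2*N) m β (consT (2*N-1) m μ s)) (c τ) * deriv (deriv c) τ μ
          * ∏ k : Fin (2*N-2), deriv c τ (s k))
      = ∑ μ : Fin m, ∑ s : Fin (2*N-2) → Fin m,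
          g (consT (2*N) m β (consT (2*N-1) m μ s)) (c τ)
            * (deriv (deriv c) τ μ * ∏ j : Fin (2*N-2), deriv c τ (s j)) := by
    exact Finset.sum_congr rfl (fun μ _ => Finset.sum_congr rfl (fun s _ => by ring))
  have hchunk3 : (∑ μ : Fin m,
        (partialDeriv (A μ) β (c τ) - partialDeriv (A β) μ (c τ)) * deriv c τ μ)
      = (∑ μ, partialDeriv (A μ) β (c τ) * deriv c τ μ)
        - ∑ μ, partialDeriv (A β) μ (c τ) * deriv c τ μ := by
    rw [← Finset.sum_sub_distrib]
    exact Finset.sum_congr rfl (fun μ _ => by ring)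
  rw [hchunk1, hchunk2, hchunk3]
  linarith [hEL']
end

section
/- (Lemma: solutions of the relativistic equation do not leave the constraint surface.) Let c : ℝ → ℝᵐ be a twice continuously differentiable curve with nowhere-vanishing derivative satisfying E_β(c)(τ) = 0 for all β and all τ. If G(c(τ₀), c'(τ₀)) = 1 for some τ₀ ∈ ℝ, then G(c(τ), c'(τ)) = 1 for all τ ∈ ℝ. -/
open ContDiff

open scoped BigOperators

def dcons {m : ℕ} {M n : ℕ} (h : M = n + 1) (μ : Fin m) (t : Fin n → Fin m) :
    Fin M → Fin m :=
  (Fin.cons μ t : Fin (n+1) → Fin m) ∘ Fin.cast h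

lemma dcons_apply {m M n : ℕ} (h : M = n + 1) (μ : Fin m) (t : Fin n → Fin m) (k : Fin M) :
    dcons h μ t k = if hk : (k : ℕ) = 0 then μ else t ⟨(k : ℕ) - 1, by have := k.isLt; omega⟩ := by
  unfold dcons
  rcases Nat.eq_zero_or_pos k.val with hk | hk
  · have : Fin.cast h k = 0 := by ext; simpa using hk
    simp [this, hk]
  · have h1 : (k : ℕ) - 1 < n := by have := k.isLt; omega
    have : Fin.cast h k = Fin.succ ⟨(k : ℕ) - 1, h1⟩ := by ext; simp; omega
    rw [Function.comp_apply, this, Fin.cons_succ]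
    rw [dif_neg (by omega)]

lemma tupCons1_eq_dcons {m N : ℕ} (h : 2*N = (2*N-1)+1) (μ : Fin m) (t : Fin (2*N-1) → Fin m) :
    tupCons1 m N μ t = dcons h μ t := by
  funext k
  rw [dcons_apply, tupCons1]

lemma tupCons2_eq_dcons {m N : ℕ} (h : 2*N = (2*N-1)+1) (h' : 2*N-1 = (2*N-2)+1)
    (β μ : Fin m) (s : Fin (2*N-2) → Fin m) :
    tupCons2 m N β μ s = dcons h β (dcons h' μ s) := by
  funext k
  simp only [tupCons2]
  rw [dcons_apply]
  by_cases h0 : (k : ℕ) = 0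
  · simp [h0]
  · rw [dif_neg h0, dif_neg h0, dcons_apply]
    split_ifs with h1 h2 h2
    · rfl
    · exact absurd (by simp [h1]) h2
    · exfalso; apply h1; have h2' : (k:ℕ) - 1 = 0 := h2; omega
    · exact congrArg s (Fin.ext (show (k:ℕ)-2 = (k:ℕ)-1-1 by omega))

lemma sum_dcons {m M n : ℕ} (h : M = n + 1) (f : (Fin M → Fin m) → ℝ) :
    ∑ α : Fin M → Fin m, f α = ∑ μ : Fin m, ∑ t : Fin n → Fin m, f (dcons h μ t) := by
  have e1 : ∑ α : Fin M → Fin m, f α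
      = ∑ α' : Fin (n+1) → Fin m, f (α' ∘ Fin.cast h) := by
    refine (Fintype.sum_equiv (Equiv.arrowCongr (finCongr h.symm) (Equiv.refl (Fin m))) _ _ ?_).symm
    intro α'
    rfl
  rw [e1, ← Equiv.sum_comp (Fin.consEquiv (fun _ => Fin m))
      (fun α' => f (α' ∘ Fin.cast h)), Fintype.sum_prod_type]
  rfl

lemma prod_dcons {m M n : ℕ} (h : M = n + 1) (F : Fin m → ℝ) (μ : Fin m) (t : Fin n → Fin m) :
    ∏ k : Fin M, F (dcons h μ t k) = F μ * ∏ j : Fin n, F (t j) := by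
  have e1 : ∏ k : Fin M, F (dcons h μ t k)
      = ∏ k' : Fin (n+1), F ((Fin.cons μ t : Fin (n+1) → Fin m) k') := by
    refine Fintype.prod_equiv (finCongr h) _ _ (fun k => ?_)
    rfl
  rw [e1, Fin.prod_univ_succ]
  simp

lemma prod_erase_zero {n : ℕ} (f : Fin (n+1) → ℝ) :
    ∏ k ∈ Finset.univ.erase 0, f k = ∏ j : Fin n, f j.succ := by
  refine (Finset.prod_bij' (fun (k : Fin (n+1)) (hk : k ∈ Finset.univ.erase 0) =>
    k.pred (Finset.mem_erase.1 hk).1) (fun j _ => j.succ) ?_ ?_ ?_ ?_ ?_)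
  · intros; simp
  · intro j _; simp [Finset.mem_erase, Fin.succ_ne_zero]
  · intros a ha; simp
  · intros a ha; simp
  · intros a ha; simp

lemma prod_erase_dcons {m M n : ℕ} (h : M = n + 1) (hM : 0 < M) (F : Fin m → ℝ)
    (μ : Fin m) (t : Fin n → Fin m) :
    ∏ k ∈ Finset.univ.erase (⟨0, hM⟩ : Fin M), F (dcons h μ t k)
      = ∏ j : Fin n, F (t j) := by
  have e1 : ∏ k ∈ Finset.univ.erase (⟨0, hM⟩ : Fin M), F (dcons h μ t k)
      = ∏ k' ∈ Finset.univ.erase (0 : Fin (n+1)), F ((Fin.cons μ t : Fin (n+1) → Fin m) k') := by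
    refine Finset.prod_equiv (finCongr h) ?_ ?_
    · intro i; simp [Finset.mem_erase, Fin.ext_iff]
    · intro i _; rfl
  rw [e1, prod_erase_zero]
  simp

lemma clm_eval_sum {m : ℕ} (L : (Fin m → ℝ) →L[ℝ] ℝ) (v : Fin m → ℝ) :
    L v = ∑ μ, v μ * L (Pi.single μ 1) := by
  have hv : v = ∑ μ, v μ • (Pi.single μ 1 : Fin m → ℝ) := by
    funext i
    simp [Finset.sum_apply, Pi.single_apply]
  conv_lhs => rw [hv]
  rw [map_sum]
  simp [smul_eq_mul]

lemma sum_perm_head {m M : ℕ} (z j : Fin M) (G2 : (Fin M → Fin m) → ℝ)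
    (hsymG : ∀ (α : Fin M → Fin m) (σ : Equiv.Perm (Fin M)), G2 (α ∘ σ) = G2 α)
    (F H : Fin m → ℝ) :
    ∑ α : Fin M → Fin m, G2 α * ((∏ k ∈ Finset.univ.erase j, F (α k)) * H (α j))
      = ∑ α : Fin M → Fin m, G2 α * ((∏ k ∈ Finset.univ.erase z, F (α k)) * H (α z)) := by
  set σ : Equiv.Perm (Fin M) := Equiv.swap j z with hσ
  have e := Equiv.sum_comp (Equiv.arrowCongr σ.symm (Equiv.refl (Fin m)))
    (fun α : Fin M → Fin m => G2 α * ((∏ k ∈ Finset.univ.erase j, F (α k)) * H (α j)))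
  rw [← e]
  refine Finset.sum_congr rfl fun β _ => ?_
  have hb : (Equiv.arrowCongr σ.symm (Equiv.refl (Fin m))) β = β ∘ σ := by
    funext x
    simp [Equiv.arrowCongr_apply]
  rw [hb]
  have h1 : G2 (β ∘ σ) = G2 β := hsymG β σ
  have h2 : (β ∘ σ) j = β z := by simp [hσ, Equiv.swap_apply_left]
  have h3 : ∏ k ∈ Finset.univ.erase j, F ((β ∘ σ) k) = ∏ k ∈ Finset.univ.erase z, F (β k) := by
    refine Finset.prod_equiv σ ?_ ?_
    · intro i
      simp only [Finset.mem_erase, Finset.mem_univ, and_true]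
      constructor
      · intro hi hc
        exact hi (σ.injective (by rw [hc, hσ, Equiv.swap_apply_left]))
      · intro hi hc
        exact hi (by rw [hc, hσ, Equiv.swap_apply_left])
    · intro i _; rfl
  rw [h1, h2, h3]

lemma hasDerivAt_G (m N : ℕ) (g : (Fin (2 * N) → Fin m) → (Fin m → ℝ) → ℝ)
    (hg : ∀ α, ContDiff ℝ ∞ (g α)) (c : ℝ → Fin m → ℝ)
    (hdc : Differentiable ℝ c) (hdc1 : Differentiable ℝ (deriv c)) (τ : ℝ) :
    HasDerivAt (fun τ => Gfun m N g (c τ) (deriv c τ))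
      (∑ α : Fin (2*N) → Fin m,
        (fderiv ℝ (g α) (c τ) (deriv c τ) * ∏ k, deriv c τ (α k)
          + g α (c τ) * ∑ j, (∏ k ∈ Finset.univ.erase j, deriv c τ (α k)) * deriv (deriv c) τ (α j))) τ := by
  have hcomp : ∀ (i : Fin m), HasDerivAt (fun τ => deriv c τ i) (deriv (deriv c) τ i) τ :=
    fun i => (hasDerivAt_pi.1 (hdc1.differentiableAt.hasDerivAt)) i
  unfold Gfun
  refine HasDerivAt.fun_sum fun α _ => ?_
  have h1 : HasDerivAt (fun τ => g α (c τ)) (fderiv ℝ (g α) (c τ) (deriv c τ)) τ :=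
    (((hg α).differentiable (by norm_num)).differentiableAt.hasFDerivAt).comp_hasDerivAt τ
      (hdc.differentiableAt.hasDerivAt)
  have h2 : HasDerivAt (fun τ => ∏ k, deriv c τ (α k))
      (∑ j, (∏ k ∈ Finset.univ.erase j, deriv c τ (α k)) * deriv (deriv c) τ (α j)) τ := by
    have := HasDerivAt.fun_finset_prod (u := Finset.univ)
      (f := fun k τ => deriv c τ (α k)) (f' := fun k => deriv (deriv c) τ (α k)) (x := τ)
      (fun k _ => hcomp (α k))
    simpa [smul_eq_mul, mul_comm] using this
  exact h1.mul h2

lemma key_algebra (m N : ℕ) (hN : 1 ≤ N)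
    (g : (Fin (2*N) → Fin m) → (Fin m → ℝ) → ℝ)
    (hsym : ∀ (α : Fin (2 * N) → Fin m) (σ : Equiv.Perm (Fin (2 * N))), g (α ∘ σ) = g α)
    (A : Fin m → (Fin m → ℝ) → ℝ)
    (q v a : Fin m → ℝ) (Gp : ℝ)
    (hE0 : ∀ β : Fin m,
      (∑ μ : Fin m, ∑ t : Fin (2 * N - 1) → Fin m,
        ((1 / (2 * N : ℝ)) * partialDeriv (g (tupCons1 m N μ t)) β q
            - partialDeriv (g (tupCons1 m N β t)) μ q)
          * v μ * ∏ k : Fin (2 * N - 1), v (t k))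
      - (2 * N - 1 : ℝ) * (∑ μ : Fin m, ∑ s : Fin (2 * N - 2) → Fin m,
          g (tupCons2 m N β μ s) q * a μ * ∏ k : Fin (2 * N - 2), v (s k))
      + Gp * ∑ μ : Fin m, Fstr A β μ q * v μ = 0) :
    ∑ α : Fin (2*N) → Fin m,
      ((∑ β, v β * partialDeriv (g α) β q) * ∏ k, v (α k)
        + g α q * ∑ j, (∏ k ∈ Finset.univ.erase j, v (α k)) * a (α j)) = 0 := by
  have h2N : 0 < 2*N := by omega
  have hn1 : 2*N = (2*N-1)+1 := by omega
  have hn2 : 2*N-1 = (2*N-2)+1 := by omega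
  have hNR : (1:ℝ) ≤ (N:ℝ) := by exact_mod_cast hN
  have h2NR : (0:ℝ) < 2 * N := by linarith
  have hn0 : (2 * N : ℝ) ≠ 0 := ne_of_gt h2NR
  set z : Fin (2*N) := ⟨0, h2N⟩ with hzdef
  -- abbreviations as explicit sums
  set P : ℝ := ∑ β, ∑ μ, ∑ t : Fin (2*N-1) → Fin m,
    v β * partialDeriv (g (dcons hn1 μ t)) β q * v μ * ∏ j, v (t j) with hP
  set W : ℝ := ∑ μ, ∑ β, ∑ s : Fin (2*N-2) → Fin m,
    g (dcons hn1 μ (dcons hn2 β s)) q * (v β * ∏ k, v (s k)) * a μ with hW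
  -- Step S1 : the "position" part of the derivative equals P
  have S1 : ∑ α : Fin (2*N) → Fin m, (∑ β, v β * partialDeriv (g α) β q) * ∏ k, v (α k) = P := by
    calc ∑ α : Fin (2*N) → Fin m, (∑ β, v β * partialDeriv (g α) β q) * ∏ k, v (α k)
        = ∑ μ, ∑ t : Fin (2*N-1) → Fin m, ∑ β,
            v β * partialDeriv (g (dcons hn1 μ t)) β q * v μ * ∏ j, v (t j) := by
          rw [sum_dcons hn1]
          refine Finset.sum_congr rfl fun μ _ => Finset.sum_congr rfl fun t _ => ?_
          rw [prod_dcons hn1, Finset.sum_mul]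
          refine Finset.sum_congr rfl fun β _ => ?_
          ring
      _ = ∑ μ, ∑ β, ∑ t : Fin (2*N-1) → Fin m,
            v β * partialDeriv (g (dcons hn1 μ t)) β q * v μ * ∏ j, v (t j) :=
          Finset.sum_congr rfl fun μ _ => Finset.sum_comm
      _ = P := by rw [hP]; exact Finset.sum_comm
  -- Step S2 : the "velocity" part equals 2N * W
  have S2 : ∑ α : Fin (2*N) → Fin m,
      g α q * ∑ j, (∏ k ∈ Finset.univ.erase j, v (α k)) * a (α j) = (2*N:ℝ) * W := by
    have e1 : ∑ α : Fin (2*N) → Fin m,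
        g α q * ∑ j, (∏ k ∈ Finset.univ.erase j, v (α k)) * a (α j)
        = ∑ j : Fin (2*N), ∑ α : Fin (2*N) → Fin m,
            g α q * ((∏ k ∈ Finset.univ.erase j, v (α k)) * a (α j)) := by
      rw [Finset.sum_comm]
      refine Finset.sum_congr rfl fun α _ => ?_
      rw [Finset.mul_sum]
    have e2 : ∀ j : Fin (2*N),
        ∑ α : Fin (2*N) → Fin m, g α q * ((∏ k ∈ Finset.univ.erase j, v (α k)) * a (α j))
          = ∑ α : Fin (2*N) → Fin m, g α q * ((∏ k ∈ Finset.univ.erase z, v (α k)) * a (α z)) :=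
      fun j => sum_perm_head z j (fun α => g α q) (fun α σ => congrFun (hsym α σ) q) v a
    have e3 : ∑ α : Fin (2*N) → Fin m, g α q * ((∏ k ∈ Finset.univ.erase z, v (α k)) * a (α z))
        = W := by
      rw [sum_dcons hn1, hW]
      refine Finset.sum_congr rfl fun μ _ => ?_
      rw [sum_dcons hn2]
      refine Finset.sum_congr rfl fun β _ => Finset.sum_congr rfl fun s _ => ?_
      have hz0 : dcons hn1 μ (dcons hn2 β s) z = μ := by
        rw [dcons_apply]; exact dif_pos rfl
      rw [prod_erase_dcons hn1 h2N, prod_dcons hn2, hz0]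
      ring
    rw [e1]
    rw [Finset.sum_congr rfl (fun j _ => (e2 j).trans e3), Finset.sum_const,
      Finset.card_univ, Fintype.card_fin, nsmul_eq_mul]
    push_cast
    ring
  -- Q2 = P (renaming of summation variables)
  have S6 : ∑ β, ∑ μ, ∑ t : Fin (2*N-1) → Fin m,
      v β * partialDeriv (g (dcons hn1 β t)) μ q * v μ * ∏ j, v (t j) = P := by
    rw [Finset.sum_comm, hP]
    refine Finset.sum_congr rfl fun x _ => Finset.sum_congr rfl fun y _ =>
      Finset.sum_congr rfl fun t _ => ?_
    ring
  -- contraction of the first term of E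
  have S7 : ∑ β, v β * (∑ μ : Fin m, ∑ t : Fin (2 * N - 1) → Fin m,
        ((1 / (2 * N : ℝ)) * partialDeriv (g (tupCons1 m N μ t)) β q
            - partialDeriv (g (tupCons1 m N β t)) μ q)
          * v μ * ∏ k : Fin (2 * N - 1), v (t k))
      = (1 / (2 * N : ℝ)) * P - P := by
    have e1 : ∀ β, v β * (∑ μ : Fin m, ∑ t : Fin (2 * N - 1) → Fin m,
        ((1 / (2 * N : ℝ)) * partialDeriv (g (tupCons1 m N μ t)) β q
            - partialDeriv (g (tupCons1 m N β t)) μ q)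
          * v μ * ∏ k : Fin (2 * N - 1), v (t k))
        = (∑ μ, ∑ t : Fin (2*N-1) → Fin m,
            (1 / (2 * N : ℝ)) * (v β * partialDeriv (g (dcons hn1 μ t)) β q * v μ * ∏ j, v (t j)))
          - (∑ μ, ∑ t : Fin (2*N-1) → Fin m,
            v β * partialDeriv (g (dcons hn1 β t)) μ q * v μ * ∏ j, v (t j)) := by
      intro β
      rw [Finset.mul_sum, ← Finset.sum_sub_distrib]
      refine Finset.sum_congr rfl fun μ _ => ?_
      rw [Finset.mul_sum, ← Finset.sum_sub_distrib]
      refine Finset.sum_congr rfl fun t _ => ?_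
      rw [tupCons1_eq_dcons hn1, tupCons1_eq_dcons hn1]
      ring
    rw [Finset.sum_congr rfl fun β _ => e1 β, Finset.sum_sub_distrib]
    rw [S6]
    congr 1
    rw [hP, Finset.mul_sum]
    refine Finset.sum_congr rfl fun β _ => ?_
    rw [Finset.mul_sum]
    refine Finset.sum_congr rfl fun μ _ => ?_
    rw [Finset.mul_sum]
  -- contraction of the second term of E
  have S5 : ∑ β, v β * (∑ μ : Fin m, ∑ s : Fin (2 * N - 2) → Fin m,
        g (tupCons2 m N β μ s) q * a μ * ∏ k : Fin (2 * N - 2), v (s k)) = W := by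
    have hgsw : ∀ (β μ : Fin m) (s : Fin (2*N-2) → Fin m),
        g (tupCons2 m N β μ s) = g (dcons hn1 μ (dcons hn2 β s)) := by
      intro β μ s
      have key : tupCons2 m N β μ s ∘ (Equiv.swap z ⟨1, by omega⟩) = tupCons2 m N μ β s := by
        funext k
        rcases eq_or_ne k z with hk | hk
        · rw [Function.comp_apply, hk, Equiv.swap_apply_left]
          simp only [tupCons2]
          rw [dif_neg (by simp), dif_pos (by simp), dif_pos (by simp [hzdef])]
        · rcases eq_or_ne k ⟨1, by omega⟩ with hk1 | hk1
          · rw [Function.comp_apply, hk1, Equiv.swap_apply_right]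
            simp only [tupCons2]
            rw [dif_pos (by simp [hzdef]), dif_neg (by simp), dif_pos (by simp)]
          · rw [Function.comp_apply, Equiv.swap_apply_of_ne_of_ne hk hk1]
            simp only [tupCons2]
            have hk0 : (k : ℕ) ≠ 0 := fun hc => hk (Fin.ext (by simp [hzdef, hc]))
            have hk1' : (k : ℕ) ≠ 1 := fun hc => hk1 (Fin.ext (by simp [hc]))
            rw [dif_neg hk0, dif_neg hk1', dif_neg hk0, dif_neg hk1']
      rw [← hsym (tupCons2 m N β μ s) (Equiv.swap z ⟨1, by omega⟩), key,
        tupCons2_eq_dcons hn1 hn2]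
    have e1 : ∀ β, v β * (∑ μ : Fin m, ∑ s : Fin (2 * N - 2) → Fin m,
        g (tupCons2 m N β μ s) q * a μ * ∏ k : Fin (2 * N - 2), v (s k))
        = ∑ μ, ∑ s : Fin (2*N-2) → Fin m,
            g (dcons hn1 μ (dcons hn2 β s)) q * (v β * ∏ k, v (s k)) * a μ := by
      intro β
      rw [Finset.mul_sum]
      refine Finset.sum_congr rfl fun μ _ => ?_
      rw [Finset.mul_sum]
      refine Finset.sum_congr rfl fun s _ => ?_
      rw [hgsw β μ s]
      ring
    rw [Finset.sum_congr rfl fun β _ => e1 β, Finset.sum_comm, hW]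
  -- contraction of the F-term vanishes
  have S8 : ∑ β, v β * ∑ μ, Fstr A β μ q * v μ = 0 := by
    have hanti : ∀ β μ, Fstr A β μ q = - Fstr A μ β q := by
      intro β μ; simp only [Fstr]; ring
    have h1 : ∑ β, v β * ∑ μ, Fstr A β μ q * v μ
        = ∑ β, ∑ μ, v β * (Fstr A β μ q * v μ) := by
      refine Finset.sum_congr rfl fun β _ => ?_
      rw [Finset.mul_sum]
    have h2 : ∑ β, ∑ μ, v β * (Fstr A β μ q * v μ)
        = ∑ μ, ∑ β, v β * (Fstr A β μ q * v μ) := Finset.sum_comm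
    have h3 : ∑ μ, ∑ β, v β * (Fstr A β μ q * v μ)
        = ∑ μ, ∑ β, -(v μ * (Fstr A μ β q * v β)) := by
      refine Finset.sum_congr rfl fun μ _ => Finset.sum_congr rfl fun β _ => ?_
      rw [hanti β μ]
      ring
    have h4 : ∑ μ : Fin m, ∑ β : Fin m, -(v μ * (Fstr A μ β q * v β))
        = - ∑ μ, ∑ β, v μ * (Fstr A μ β q * v β) := by
      simp [Finset.sum_neg_distrib]
    have h5 : ∑ β, ∑ μ, v β * (Fstr A β μ q * v μ) = 0 := by
      have := (h2.trans h3).trans h4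
      linarith [this]
    rw [h1, h5]
  -- contract the full equation with v
  have hcontract : ((1 / (2 * N : ℝ)) * P - P) - (2 * N - 1 : ℝ) * W + Gp * 0 = 0 := by
    have hstep : ((1 / (2 * N : ℝ)) * P - P) - (2 * N - 1 : ℝ) * W + Gp * 0
        = ∑ β, v β * (∑ μ : Fin m, ∑ t : Fin (2 * N - 1) → Fin m,
            ((1 / (2 * N : ℝ)) * partialDeriv (g (tupCons1 m N μ t)) β q
                - partialDeriv (g (tupCons1 m N β t)) μ q)
              * v μ * ∏ k : Fin (2 * N - 1), v (t k))
          - (2 * N - 1 : ℝ) * ∑ β, v β * (∑ μ : Fin m, ∑ s : Fin (2 * N - 2) → Fin m,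
              g (tupCons2 m N β μ s) q * a μ * ∏ k : Fin (2 * N - 2), v (s k))
          + Gp * ∑ β, v β * ∑ μ, Fstr A β μ q * v μ := by rw [S7, S5, S8]
    rw [hstep]
    have : ∑ β, v β * ((∑ μ : Fin m, ∑ t : Fin (2 * N - 1) → Fin m,
        ((1 / (2 * N : ℝ)) * partialDeriv (g (tupCons1 m N μ t)) β q
            - partialDeriv (g (tupCons1 m N β t)) μ q)
          * v μ * ∏ k : Fin (2 * N - 1), v (t k))
      - (2 * N - 1 : ℝ) * (∑ μ : Fin m, ∑ s : Fin (2 * N - 2) → Fin m,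
          g (tupCons2 m N β μ s) q * a μ * ∏ k : Fin (2 * N - 2), v (s k))
      + Gp * ∑ μ : Fin m, Fstr A β μ q * v μ) = 0 :=
      Finset.sum_eq_zero fun β _ => by rw [hE0 β, mul_zero]
    calc ∑ β, v β * (∑ μ : Fin m, ∑ t : Fin (2 * N - 1) → Fin m,
          ((1 / (2 * N : ℝ)) * partialDeriv (g (tupCons1 m N μ t)) β q
              - partialDeriv (g (tupCons1 m N β t)) μ q)
            * v μ * ∏ k : Fin (2 * N - 1), v (t k))
        - (2 * N - 1 : ℝ) * ∑ β, v β * (∑ μ : Fin m, ∑ s : Fin (2 * N - 2) → Fin m,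
            g (tupCons2 m N β μ s) q * a μ * ∏ k : Fin (2 * N - 2), v (s k))
        + Gp * ∑ β, v β * ∑ μ, Fstr A β μ q * v μ
        = ∑ β, v β * ((∑ μ : Fin m, ∑ t : Fin (2 * N - 1) → Fin m,
            ((1 / (2 * N : ℝ)) * partialDeriv (g (tupCons1 m N μ t)) β q
                - partialDeriv (g (tupCons1 m N β t)) μ q)
              * v μ * ∏ k : Fin (2 * N - 1), v (t k))
          - (2 * N - 1 : ℝ) * (∑ μ : Fin m, ∑ s : Fin (2 * N - 2) → Fin m,
              g (tupCons2 m N β μ s) q * a μ * ∏ k : Fin (2 * N - 2), v (s k))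
          + Gp * ∑ μ : Fin m, Fstr A β μ q * v μ) := by
            rw [Finset.mul_sum, Finset.mul_sum, ← Finset.sum_sub_distrib,
              ← Finset.sum_add_distrib]
            refine Finset.sum_congr rfl fun β _ => ?_
            ring
      _ = 0 := this
  -- conclude
  rw [Finset.sum_add_distrib, S1, S2]
  have h3 : P - (2*N:ℝ)*P = (2*N:ℝ)*((2 * N - 1 : ℝ)*W) := by
    have h2 : (1 / (2 * N : ℝ)) * P - P = (2 * N - 1 : ℝ) * W := by linarith [hcontract]
    have := congrArg (fun x => (2*N:ℝ) * x) h2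
    simp only [mul_sub] at this
    rw [← mul_assoc, mul_one_div_cancel hn0, one_mul] at this
    linarith [this]
  have h6 : (1 - (2*N:ℝ)) * (P + (2*N:ℝ)*W) = 0 := by linear_combination h3
  rcases mul_eq_zero.1 h6 with h | h
  · exfalso; linarith
  · linarith

/-- Lemma: solutions of the relativistic equation `E_β = 0` do not leave
the constraint surface `W_G = {G = 1}`: if `G(c(τ₀), c'(τ₀)) = 1` for some `τ₀`, then
`G(c(τ), c'(τ)) = 1` for all `τ`. -/
theorem relativistic_equation_preserves_constraint
    (m N : ℕ) (hm : 1 ≤ m) (hN : 1 ≤ N)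
    (g : (Fin (2 * N) → Fin m) → (Fin m → ℝ) → ℝ)
    (hg : ∀ α, ContDiff ℝ ∞ (g α))
    (hsym : ∀ (α : Fin (2 * N) → Fin m) (σ : Equiv.Perm (Fin (2 * N))), g (α ∘ σ) = g α)
    (hpos : ∀ (q v : Fin m → ℝ), v ≠ 0 → 0 < Gfun m N g q v)
    (A : Fin m → (Fin m → ℝ) → ℝ) (hA : ∀ μ, ContDiff ℝ ∞ (A μ))
    (c : ℝ → Fin m → ℝ) (hc : ContDiff ℝ 2 c) (hc' : ∀ τ : ℝ, deriv c τ ≠ 0)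
    (hE : ∀ (β : Fin m) (τ : ℝ), Erel m N g A c β τ = 0)
    (τ₀ : ℝ) (hτ₀ : Gfun m N g (c τ₀) (deriv c τ₀) = 1) :
    ∀ τ : ℝ, Gfun m N g (c τ) (deriv c τ) = 1 := by
  have hdc : Differentiable ℝ c := hc.differentiable two_ne_zero
  have hdc1 : Differentiable ℝ (deriv c) := by
    have h21 : (2 : WithTop ℕ∞) = 1 + 1 := by norm_num
    rw [h21] at hc
    exact (contDiff_succ_iff_deriv.mp hc).2.2.differentiable one_ne_zero
  have hzero : ∀ τ, HasDerivAt (fun τ => Gfun m N g (c τ) (deriv c τ)) 0 τ := by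
    intro τ
    have hD := hasDerivAt_G m N g hg c hdc hdc1 τ
    have hkey : (∑ α : Fin (2*N) → Fin m,
        (fderiv ℝ (g α) (c τ) (deriv c τ) * ∏ k, deriv c τ (α k)
          + g α (c τ) * ∑ j, (∏ k ∈ Finset.univ.erase j, deriv c τ (α k))
              * deriv (deriv c) τ (α j))) = 0 := by
      have e0 : ∀ α : Fin (2*N) → Fin m, (fderiv ℝ (g α) (c τ)) (deriv c τ)
          = ∑ β, deriv c τ β * partialDeriv (g α) β (c τ) := fun α => clm_eval_sum _ _
      calc (∑ α : Fin (2*N) → Fin m,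
          (fderiv ℝ (g α) (c τ) (deriv c τ) * ∏ k, deriv c τ (α k)
            + g α (c τ) * ∑ j, (∏ k ∈ Finset.univ.erase j, deriv c τ (α k))
                * deriv (deriv c) τ (α j)))
          = ∑ α : Fin (2*N) → Fin m,
            ((∑ β, deriv c τ β * partialDeriv (g α) β (c τ)) * ∏ k, deriv c τ (α k)
              + g α (c τ) * ∑ j, (∏ k ∈ Finset.univ.erase j, deriv c τ (α k))
                  * deriv (deriv c) τ (α j)) :=
            Finset.sum_congr rfl fun α _ => by rw [e0 α]
        _ = 0 := key_algebra m N hN g hsym A (c τ) (deriv c τ) (deriv (deriv c) τ)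
              (Gfun m N g (c τ) (deriv c τ) ^ (1 - 1/(2*N:ℝ))) (fun β => hE β τ)
    rw [← hkey]
    exact hD
  intro τ
  have hdiff : Differentiable ℝ (fun τ => Gfun m N g (c τ) (deriv c τ)) :=
    fun τ => (hzero τ).differentiableAt
  have hder0 : ∀ τ, deriv (fun τ => Gfun m N g (c τ) (deriv c τ)) τ = 0 :=
    fun τ => (hzero τ).deriv
  calc Gfun m N g (c τ) (deriv c τ) = Gfun m N g (c τ₀) (deriv c τ₀) :=
        is_const_of_deriv_eq_zero hdiff hder0 τ τ₀
    _ = 1 := hτ₀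
end
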